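/- arXiv:2306.12395 — 4 statements merged into one kernel-verified Lean document; each statement's English description precedes it below -/
import Mathlib

section
/- For each n ≥ 2, the operator W_n/√n on H² is a pure isometry (a unilateral shift) of infinite multiplicity; equivalently, ⋂_{k≥0} (W_n)^k(H²) = {0} and the wandering subspace H² ⊖ W_n(H²) is infinite-dimensional. -/
open Filter Topology
open scoped ComplexInnerProductSpace ENNReal NNReal

/-- The Hardy space `H²(𝔻)`, modeled as the space of square-summable Taylor
coefficient sequences. -/
noncomputable abbrev H2 : Type := lp (fun _ : ℕ => ℂ) 2

/-- Evaluation of an element of `H²` at a point of the unit disk, via its power series. -/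
noncomputable def eval (f : H2) (z : ℂ) : ℂ := ∑' n : ℕ, (f n) * z ^ n

lemma eval_summable (f : H2) {z : ℂ} (hz : ‖z‖ < 1) :
    Summable (fun k : ℕ => f k * z ^ k) := by
  apply Summable.of_norm
  apply Summable.of_nonneg_of_le (fun k => norm_nonneg _)
    (fun k => ?_) (((summable_geometric_of_lt_one (norm_nonneg z) hz)).mul_left ‖f‖)
  rw [norm_mul, norm_pow]
  exact mul_le_mul_of_nonneg_right (lp.norm_apply_le_norm (by norm_num) f k)
    (by positivity)

lemma eval_hasSum (f : H2) {z : ℂ} (hz : ‖z‖ < 1) :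
    HasSum (fun k : ℕ => f k * z ^ k) (eval f z) := (eval_summable f hz).hasSum

lemma eval_hasFPowerSeries (f : H2) :
    HasFPowerSeriesOnBall (eval f) (FormalMultilinearSeries.ofScalars ℂ (fun k => f k)) 0 1 := by
  refine ⟨?_, one_pos, ?_⟩
  · apply FormalMultilinearSeries.le_radius_of_bound _ ‖f‖
    intro k
    rw [FormalMultilinearSeries.ofScalars_norm]
    simpa using lp.norm_apply_le_norm (by norm_num) f k
  · intro y hy
    simp only [EMetric.mem_ball, edist_zero_right] at hy
    have hy' : ‖y‖ < 1 := by
      rw [← coe_nnnorm]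
      exact_mod_cast (show (‖y‖₊ : ℝ≥0∞) < 1 from hy)
    simp only [FormalMultilinearSeries.ofScalars_apply_eq, zero_add, smul_eq_mul]
    exact eval_hasSum f hy'

lemma eval_eq_zero (f : H2) (h : ∀ z : ℂ, ‖z‖ < 1 → eval f z = 0) : f = 0 := by
  have h1 : HasFPowerSeriesAt (eval f) (FormalMultilinearSeries.ofScalars ℂ (fun k => f k)) 0 :=
    (eval_hasFPowerSeries f).hasFPowerSeriesAt
  have h2 : (FormalMultilinearSeries.ofScalars ℂ (fun k => f k)) = 0 := by
    apply h1.eq_zero_of_eventually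
    filter_upwards [Metric.ball_mem_nhds (0:ℂ) one_pos] with z hz
    exact h z (by simpa [Metric.mem_ball, dist_zero_right] using hz)
  have h3 : (fun k : ℕ => f k) = 0 := by
    rwa [FormalMultilinearSeries.ofScalars_series_eq_zero] at h2
  ext k
  exact congr_fun h3 k

lemma sq_summable (f : H2) : Summable (fun m : ℕ => ‖f m‖ ^ (2:ℝ)) := by
  have := lp.memℓp f
  rw [memℓp_gen_iff (by norm_num : (0:ℝ) < (2:ℝ≥0∞).toReal)] at this
  simpa using this

lemma memℓp_div (n : ℕ) (hn : 1 ≤ n) (f : H2) :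
    Memℓp (fun k : ℕ => f (k / n)) 2 := by
  haveI : NeZero n := ⟨by omega⟩
  apply memℓp_gen
  have h2 : ((2:ℝ≥0∞)).toReal = (2:ℝ) := by norm_num
  rw [h2]
  have hprod : Summable (fun p : ℕ × Fin n => ‖f p.1‖ ^ (2:ℝ)) := by
    apply (summable_prod_of_nonneg (fun p => by positivity)).2
    refine ⟨fun m => Summable.of_finite, ?_⟩
    have : (fun m : ℕ => ∑' _ : Fin n, ‖f m‖ ^ (2:ℝ))
        = fun m : ℕ => (n:ℝ) * ‖f m‖ ^ (2:ℝ) := by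
      funext m
      rw [tsum_fintype]
      simp [Finset.sum_const, nsmul_eq_mul]
    rw [this]
    exact (sq_summable f).mul_left _
  exact ((Nat.divModEquiv n).summable_iff).2 hprod

noncomputable def Wg (n : ℕ) (hn : 1 ≤ n) (f : H2) : H2 :=
  ⟨fun k : ℕ => f (k / n), memℓp_div n hn f⟩

lemma Wg_apply (n : ℕ) (hn : 1 ≤ n) (f : H2) (k : ℕ) :
    (Wg n hn f) k = f (k / n) := rfl

lemma norm_Wg (n : ℕ) (hn : 1 ≤ n) (f : H2) :
    ‖Wg n hn f‖ = Real.sqrt n * ‖f‖ := by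
  haveI : NeZero n := ⟨by omega⟩
  have h2 : (0:ℝ) < (2:ℝ≥0∞).toReal := by norm_num
  have hg := lp.norm_rpow_eq_tsum h2 (Wg n hn f)
  have hf := lp.norm_rpow_eq_tsum h2 f
  have h2' : ((2:ℝ≥0∞)).toReal = (2:ℝ) := by norm_num
  rw [h2'] at hg hf
  have key : ∑' k : ℕ, ‖(Wg n hn f) k‖ ^ (2:ℝ) = (n:ℝ) * ∑' m : ℕ, ‖f m‖ ^ (2:ℝ) := by
    have e1 : ∑' k : ℕ, ‖(Wg n hn f) k‖ ^ (2:ℝ)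
        = ∑' p : ℕ × Fin n, ‖f p.1‖ ^ (2:ℝ) := by
      rw [← (Nat.divModEquiv n).tsum_eq (fun p : ℕ × Fin n => ‖f p.1‖ ^ (2:ℝ))]
      rfl
    have hprod : Summable (fun p : ℕ × Fin n => ‖f p.1‖ ^ (2:ℝ)) := by
      rw [← (Nat.divModEquiv n).summable_iff]
      have hm := (memℓp_gen_iff h2).1 (memℓp_div n hn f)
      rw [h2'] at hm
      exact hm
    rw [e1, Summable.tsum_prod' hprod (fun m => Summable.of_finite), tsum_congr
      (fun m : ℕ => by rw [tsum_fintype]; simp [Finset.sum_const, nsmul_eq_mul] :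
        ∀ m : ℕ, ∑' _ : Fin n, ‖f m‖ ^ (2:ℝ) = (n:ℝ) * ‖f m‖ ^ (2:ℝ))]
    exact tsum_mul_left
  rw [key, ← hf] at hg
  have hgn : ‖Wg n hn f‖ ^ (2:ℝ) = ((n:ℝ) * (‖f‖ ^ (2:ℝ))) := hg
  have e2 : ∀ x : ℝ, 0 ≤ x → x ^ (2:ℝ) = x ^ 2 := fun x hx => by
    rw [← Real.rpow_natCast x 2]; norm_num
  rw [e2 _ (norm_nonneg _), e2 _ (norm_nonneg _)] at hgn
  calc ‖Wg n hn f‖ = Real.sqrt (‖Wg n hn f‖ ^ 2) := (Real.sqrt_sq (norm_nonneg _)).symm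
    _ = Real.sqrt ((n:ℝ) * ‖f‖ ^ 2) := by rw [hgn]
    _ = Real.sqrt n * ‖f‖ := by
        rw [Real.sqrt_mul (by positivity), Real.sqrt_sq (norm_nonneg _)]

set_option maxHeartbeats 1000000 in
lemma eval_Wg (n : ℕ) (hn : 1 ≤ n) (f : H2) {z : ℂ} (hz : ‖z‖ < 1) :
    eval (Wg n hn f) z = (∑ j ∈ Finset.range n, z ^ j) * eval f (z ^ n) := by
  haveI : NeZero n := ⟨by omega⟩
  have hzn : ‖z ^ n‖ < 1 := by
    rw [norm_pow]
    exact pow_lt_one₀ (norm_nonneg z) hz (by omega)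
  set F : ℕ × Fin n → ℂ := fun p => f p.1 * z ^ (p.1 * n + (p.2 : ℕ)) with hF
  have hFe : ∀ k : ℕ, F (Nat.divModEquiv n k) = (Wg n hn f) k * z ^ k := by
    intro k
    show f (k / n) * z ^ (k / n * n + k % n) = f (k / n) * z ^ k
    rw [Nat.div_add_mod' k n]
  have hFsum : Summable F := by
    rw [← (Nat.divModEquiv n).summable_iff]
    exact Summable.congr (eval_summable (Wg n hn f) hz) (fun k => (hFe k).symm)
  have e1 : eval (Wg n hn f) z = ∑' p : ℕ × Fin n, F p := by
    rw [← (Nat.divModEquiv n).tsum_eq F]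
    exact (tsum_congr hFe).symm
  set G : Fin n × ℕ → ℂ := fun q => F (q.2, q.1) with hG
  have hGsum : Summable G := ((Equiv.prodComm (Fin n) ℕ).summable_iff).2 hFsum
  have e2 : ∑' p : ℕ × Fin n, F p = ∑' q : Fin n × ℕ, G q :=
    ((Equiv.prodComm (Fin n) ℕ).tsum_eq F).symm
  have hfiber : ∀ j : Fin n, (fun m : ℕ => G (j, m))
      = fun m : ℕ => (f m * (z ^ n) ^ m) * z ^ (j : ℕ) := by
    intro j
    funext m
    show f m * z ^ (m * n + (j:ℕ)) = f m * (z ^ n) ^ m * z ^ (j:ℕ)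
    rw [pow_add, mul_comm m n, pow_mul, mul_assoc]
  have e3 : ∑' q : Fin n × ℕ, G q
      = ∑ j : Fin n, (eval f (z ^ n) * z ^ (j : ℕ)) := by
    rw [Summable.tsum_prod' hGsum (fun j => by
      rw [hfiber j]; exact (eval_summable f hzn).mul_right _), ← tsum_fintype (L := SummationFilter.unconditional (Fin n))]
    apply tsum_congr
    intro j
    rw [hfiber j]
    exact ((eval_summable f hzn).hasSum.mul_right _).tsum_eq
  rw [e1, e2, e3, ← Finset.mul_sum, mul_comm]
  congr 1
  rw [← Fin.sum_univ_eq_sum_range (fun j => z ^ j) n]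

lemma eval_sub (a b : H2) {z : ℂ} (hz : ‖z‖ < 1) :
    eval (a - b) z = eval a z - eval b z := by
  have h1 : ∀ k : ℕ, (a - b) k * z ^ k = a k * z ^ k - b k * z ^ k := by
    intro k
    rw [lp.coeFn_sub, Pi.sub_apply, sub_mul]
  unfold eval
  rw [tsum_congr h1, Summable.tsum_sub (eval_summable a hz) (eval_summable b hz)]

lemma W_eq (W : ℕ → H2 →L[ℂ] H2)
    (hW : ∀ n : ℕ, 1 ≤ n → ∀ f : H2, ∀ z : ℂ, ‖z‖ < 1 →
      eval (W n f) z = (∑ j ∈ Finset.range n, z ^ j) * eval f (z ^ n))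
    (n : ℕ) (hn : 1 ≤ n) (f : H2) : W n f = Wg n hn f := by
  have h : W n f - Wg n hn f = 0 := by
    apply eval_eq_zero
    intro z hz
    rw [eval_sub _ _ hz, hW n hn f z hz, eval_Wg n hn f hz, sub_self]
  exact sub_eq_zero.1 h


noncomputable def sgl (i : ℕ) : H2 := lp.single 2 i (1:ℂ)

lemma inner_sgl_left (i : ℕ) (g : H2) : ⟪sgl i, g⟫ = g i := by
  rw [sgl, lp.inner_single_left]
  simp [RCLike.inner_apply]

lemma sgl_apply (i j : ℕ) : (sgl i) j = if j = i then (1:ℂ) else 0 := by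
  rw [sgl, lp.single_apply]
  split_ifs with h
  · subst h; simp
  · simp [h]

section main
variable (W : ℕ → H2 →L[ℂ] H2)
  (hW : ∀ n : ℕ, 1 ≤ n → ∀ f : H2, ∀ z : ℂ, ‖z‖ < 1 →
      eval (W n f) z = (∑ j ∈ Finset.range n, z ^ j) * eval f (z ^ n))
  (n : ℕ) (hn : 2 ≤ n)

include hW hn

lemma W_apply (f : H2) (k : ℕ) : (W n f) k = f (k / n) := by
  rw [W_eq W hW n (by omega) f]; rfl

lemma W_pow_apply (k : ℕ) (f : H2) (j : ℕ) : ((W n ^ k) f) j = f (j / n ^ k) := by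
  induction k generalizing f j with
  | zero => simp
  | succ k ih =>
    rw [pow_succ, ContinuousLinearMap.mul_apply, ih, W_apply W hW n hn,
      Nat.div_div_eq_div_mul, ← pow_succ]

lemma part2 : (⋂ k : ℕ, Set.range ⇑(W n ^ k)) = ({0} : Set H2) := by
  ext g
  simp only [Set.mem_iInter, Set.mem_range, Set.mem_singleton_iff]
  constructor
  · intro h
    have hconst : ∀ j : ℕ, g j = g 0 := by
      intro j
      obtain ⟨f, hf⟩ := h j
      have h1 : g j = f (j / n ^ j) := by rw [← hf, W_pow_apply W hW n hn]
      have h2 : g 0 = f 0 := by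
        rw [← hf, W_pow_apply W hW n hn, Nat.zero_div]
      rw [h1, h2, Nat.div_eq_of_lt (Nat.lt_pow_self (by omega : 1 < n) : j < n ^ j)]
    have hsq : Summable (fun m : ℕ => ‖g m‖ ^ (2:ℝ)) := by
      have := lp.memℓp g
      rw [memℓp_gen_iff (by norm_num : (0:ℝ) < (2:ℝ≥0∞).toReal)] at this
      simpa using this
    have htend := hsq.tendsto_atTop_zero
    have hconst' : (fun m : ℕ => ‖g m‖ ^ (2:ℝ)) = fun _ => ‖g 0‖ ^ (2:ℝ) := by
      funext m; rw [hconst m]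
    rw [hconst'] at htend
    have h0 : ‖g 0‖ ^ (2:ℝ) = 0 := tendsto_nhds_unique tendsto_const_nhds htend
    have h0' : g 0 = 0 := by
      have heq : ‖g 0‖ ^ (2:ℝ) = ‖g 0‖ ^ (2:ℕ) := by
        rw [← Real.rpow_natCast ‖(g : ∀ _ : ℕ, ℂ) 0‖ 2]; norm_num
      rw [heq] at h0
      have hn0 : ‖g 0‖ = 0 := by
        have := pow_eq_zero_iff (n := 2) (by norm_num) |>.1 h0
        exact this
      exact norm_eq_zero.1 hn0
    ext j
    rw [hconst j, h0']
    rfl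
  · rintro rfl
    exact fun k => ⟨0, map_zero _⟩


lemma part3 :
    ¬ FiniteDimensional ℂ
        ((LinearMap.range ((W n : H2 →L[ℂ] H2) : H2 →ₗ[ℂ] H2))ᗮ : Submodule ℂ H2) := by
  set K : Submodule ℂ H2 := LinearMap.range ((W n : H2 →L[ℂ] H2) : H2 →ₗ[ℂ] H2) with hK
  have hn0 : 0 < n := by omega
  -- the vectors
  set v : ℕ → H2 := fun m => sgl (n * m) - sgl (n * m + 1) with hv
  have hdiv1 : ∀ m : ℕ, (n * m) / n = m := fun m => Nat.mul_div_cancel_left m hn0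
  have hdiv2 : ∀ m : ℕ, (n * m + 1) / n = m := by
    intro m
    rw [Nat.mul_add_div hn0, Nat.div_eq_of_lt (by omega)]
    omega
  -- membership in the orthogonal complement
  have hvmem : ∀ m : ℕ, v m ∈ Kᗮ := by
    intro m
    rw [Submodule.mem_orthogonal]
    rintro u ⟨f, rfl⟩
    simp only [ContinuousLinearMap.coe_coe]
    have : ((W n f : H2) : ∀ _ : ℕ, ℂ) = fun k => f (k / n) := by
      funext k; exact W_apply W hW n hn f k
    rw [inner_sub_right]
    have e1 : ⟪(W n f : H2), sgl (n*m)⟫ = (starRingEnd ℂ) ((W n f) (n*m)) := by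
      rw [sgl, lp.inner_single_right]
      simp [RCLike.inner_apply]
    have e2 : ⟪(W n f : H2), sgl (n*m+1)⟫ = (starRingEnd ℂ) ((W n f) (n*m+1)) := by
      rw [sgl, lp.inner_single_right]
      simp [RCLike.inner_apply]
    rw [e1, e2, W_apply W hW n hn, W_apply W hW n hn, hdiv1, hdiv2, sub_self]
  -- inner products of the v's
  have hidx : ∀ m m' : ℕ, m ≠ m' →
      (n*m ≠ n*m' ∧ n*m ≠ n*m'+1 ∧ n*m+1 ≠ n*m' ∧ n*m+1 ≠ n*m'+1) := by
    intro m m' hmm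
    refine ⟨fun h => hmm (by rwa [Nat.mul_left_cancel_iff hn0] at h),
      fun h => hmm ?_, fun h => hmm ?_,
      fun h => hmm (Nat.eq_of_mul_eq_mul_left hn0 (by omega))⟩
    · have := congrArg (· / n) h
      simpa [hdiv1, hdiv2] using this
    · have := congrArg (· / n) h
      simpa [hdiv1, hdiv2] using this
  have hinner : ∀ m m' : ℕ, ⟪v m, v m'⟫ =
      ((v m') (n*m) : ℂ) - (v m') (n*m+1) := by
    intro m m'
    rw [hv]
    simp only [inner_sub_left, inner_sgl_left]
  have hvv : ∀ m : ℕ, ⟪v m, v m⟫ = 2 := by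
    intro m
    rw [hinner m m, hv]
    simp only [lp.coeFn_sub, Pi.sub_apply, sgl_apply]
    norm_num
  have hvv' : ∀ m m' : ℕ, m ≠ m' → ⟪v m, v m'⟫ = 0 := by
    intro m m' hmm
    obtain ⟨h1, h2, h3, h4⟩ := hidx m m' hmm
    rw [hinner m m', hv]
    simp only [lp.coeFn_sub, Pi.sub_apply, sgl_apply]
    rw [if_neg h1, if_neg h2, if_neg h3, if_neg h4]
    norm_num
  -- normalized family
  have hs2 : (0:ℝ) < Real.sqrt 2 := Real.sqrt_pos.2 (by norm_num)
  set c : ℂ := ((Real.sqrt 2 : ℝ)⁻¹ : ℂ) with hc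
  set u : ℕ → H2 := fun m => c • v m with hu
  have humem : ∀ m : ℕ, u m ∈ Kᗮ := fun m => Submodule.smul_mem _ _ (hvmem m)
  have hnormv : ∀ m : ℕ, ‖v m‖ = Real.sqrt 2 := by
    intro m
    rw [@norm_eq_sqrt_re_inner ℂ]
    rw [hvv m]
    norm_num
  have hon : Orthonormal ℂ u := by
    constructor
    · intro m
      rw [hu]
      simp only [norm_smul, hnormv m, hc]
      rw [norm_inv]
      simp [Complex.norm_real, abs_of_pos hs2, inv_mul_cancel₀ (ne_of_gt hs2)]
    · intro m m' hmm
      rw [hu]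
      simp only [inner_smul_left, inner_smul_right, hvv' m m' hmm, mul_zero]
  intro hfin
  have hli : LinearIndependent ℂ (fun m : ℕ => (⟨u m, humem m⟩ : Kᗮ)) := by
    apply LinearIndependent.of_comp (Kᗮ.subtype)
    exact hon.linearIndependent
  exact Module.Finite.not_linearIndependent_of_infinite _ hli

end main

/-- for `n ≥ 2`, `W_n/√n` is a pure isometry (unilateral shift) of
infinite multiplicity: `‖W_n f‖ = √n ‖f‖`, `⋂_k (W_n)^k(H²) = {0}`, and the wandering
subspace `H² ⊖ W_n(H²)` is infinite dimensional. -/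
theorem Wn_pure_shift_infinite_multiplicity (W : ℕ → H2 →L[ℂ] H2)
    (hW : ∀ n : ℕ, 1 ≤ n → ∀ f : H2, ∀ z : ℂ, ‖z‖ < 1 →
      eval (W n f) z = (∑ j ∈ Finset.range n, z ^ j) * eval f (z ^ n))
    (n : ℕ) (hn : 2 ≤ n) :
    (∀ f : H2, ‖W n f‖ = Real.sqrt n * ‖f‖) ∧
    (⋂ k : ℕ, Set.range ⇑(W n ^ k)) = ({0} : Set H2) ∧
    ¬ FiniteDimensional ℂ
        ((LinearMap.range ((W n : H2 →L[ℂ] H2) : H2 →ₗ[ℂ] H2))ᗮ : Submodule ℂ H2) := by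
  refine ⟨?_, part2 W hW n hn, part3 W hW n hn⟩
  intro f
  rw [W_eq W hW n (by omega) f, norm_Wg]
end

section
/- For every k ≥ 1, the intersection ⋂_{n=k+1}^∞ ker(W_n*) equals the linear span of {1 − z^m : 1 ≤ m ≤ k}, where W_n* is the Hilbert-space adjoint of W_n on H². -/
open Filter Topology
open scoped ComplexInnerProductSpace

lemma H2.summable_eval (f : H2) {z : ℂ} (hz : ‖z‖ < 1) :
    Summable (fun n : ℕ => f n * z ^ n) := by
  have hg : Summable (fun n : ℕ => ‖f‖ * ‖z‖ ^ n) :=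
    (summable_geometric_of_lt_one (norm_nonneg z) hz).mul_left _
  apply Summable.of_norm
  refine hg.of_nonneg_of_le (fun n => norm_nonneg _) fun n => ?_
  rw [norm_mul, norm_pow]
  exact mul_le_mul_of_nonneg_right
    (lp.norm_apply_le_norm (by norm_num) f n) (by positivity)

lemma H2.hasFPowerSeriesAt (f : H2) :
    HasFPowerSeriesAt (eval f)
      (FormalMultilinearSeries.ofScalars ℂ (fun n => f n)) 0 := by
  set P := FormalMultilinearSeries.ofScalars ℂ (fun n => f n) with hP
  have hsum : P.sum = eval f := by
    funext z
    exact tsum_congr fun n => by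
      rw [hP, FormalMultilinearSeries.ofScalars_apply_eq, smul_eq_mul]
  have hrad : 0 < P.radius := by
    have h2 : ((1/2 : NNReal) : ENNReal) ≤ P.radius := by
      apply P.le_radius_of_bound ‖f‖
      intro n
      rw [hP, FormalMultilinearSeries.ofScalars_norm]
      calc ‖f n‖ * ((1/2 : NNReal) : ℝ) ^ n
          ≤ ‖f‖ * 1 := by
            apply mul_le_mul (lp.norm_apply_le_norm (by norm_num) f n)
              (pow_le_one₀ (by positivity) (by norm_num)) (by positivity)
              (norm_nonneg _)
        _ = ‖f‖ := mul_one _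
    exact lt_of_lt_of_le (by norm_num) h2
  have := (P.hasFPowerSeriesOnBall hrad).hasFPowerSeriesAt
  rwa [hsum] at this

lemma eval_injective {f g : H2}
    (h : ∀ z : ℂ, ‖z‖ < 1 → eval f z = eval g z) : f = g := by
  have hf := H2.hasFPowerSeriesAt f
  have hg := H2.hasFPowerSeriesAt g
  have heq : eval f =ᶠ[nhds (0:ℂ)] eval g := by
    filter_upwards [Metric.ball_mem_nhds (0:ℂ) one_pos] with z hz
    exact h z (by simpa using mem_ball_zero_iff.mp hz)
  have hup := (hf.congr heq).eq_formalMultilinearSeries hg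
  have hc := FormalMultilinearSeries.ofScalars_series_injective ℂ ℂ hup
  exact lp.ext (funext fun n => congrFun hc n)

lemma eval_single (i : ℕ) (z : ℂ) :
    eval (lp.single 2 i (1:ℂ)) z = z ^ i := by
  unfold eval
  rw [tsum_eq_single i]
  · rw [lp.single_apply_self, one_mul]
  · intro b hb
    rw [lp.single_apply_ne _ _ _ hb, zero_mul]

lemma eval_add (f g : H2) {z : ℂ} (hz : ‖z‖ < 1) :
    eval (f + g) z = eval f z + eval g z := by
  unfold eval
  rw [← Summable.tsum_add (f.summable_eval hz) (g.summable_eval hz)]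
  exact tsum_congr fun n => by
    have : (f + g) n = f n + g n := by
      rw [lp.coeFn_add]; rfl
    rw [this]; ring

lemma eval_sum {ι : Type*} (s : Finset ι) (F : ι → H2) {z : ℂ} (hz : ‖z‖ < 1) :
    eval (∑ m ∈ s, F m) z = ∑ m ∈ s, eval (F m) z := by
  classical
  induction s using Finset.induction_on with
  | empty => simp [eval]
  | insert _ _ ha hs =>
      rw [Finset.sum_insert ha, Finset.sum_insert ha, eval_add _ _ hz, hs]

lemma W_single (W : ℕ → H2 →L[ℂ] H2)
    (hW : ∀ n : ℕ, 1 ≤ n → ∀ f : H2, ∀ z : ℂ, ‖z‖ < 1 →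
      eval (W n f) z = (∑ j ∈ Finset.range n, z ^ j) * eval f (z ^ n))
    (n q : ℕ) (hn : 1 ≤ n) :
    W n (lp.single 2 q (1:ℂ)) = ∑ j ∈ Finset.range n, lp.single 2 (q * n + j) (1:ℂ) := by
  apply eval_injective
  intro z hz
  rw [hW n hn _ z hz, eval_single, eval_sum _ _ hz, Finset.sum_mul]
  apply Finset.sum_congr rfl
  intro j _
  rw [eval_single, ← pow_mul, ← pow_add]
  congr 1
  ring

lemma adjoint_apply (W : ℕ → H2 →L[ℂ] H2)
    (hW : ∀ n : ℕ, 1 ≤ n → ∀ f : H2, ∀ z : ℂ, ‖z‖ < 1 →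
      eval (W n f) z = (∑ j ∈ Finset.range n, z ^ j) * eval f (z ^ n))
    (n : ℕ) (hn : 1 ≤ n) (g : H2) (q : ℕ) :
    (ContinuousLinearMap.adjoint (W n) g) q = ∑ j ∈ Finset.range n, g (q * n + j) := by
  have h1 : (ContinuousLinearMap.adjoint (W n) g) q
      = ⟪lp.single 2 q (1:ℂ), ContinuousLinearMap.adjoint (W n) g⟫ := by
    rw [lp.inner_single_left]
    simp
  rw [h1, ContinuousLinearMap.adjoint_inner_right, W_single W hW n q hn, sum_inner]
  apply Finset.sum_congr rfl
  intro j _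
  rw [lp.inner_single_left]
  simp

lemma mem_ker_adjoint_iff (W : ℕ → H2 →L[ℂ] H2)
    (hW : ∀ n : ℕ, 1 ≤ n → ∀ f : H2, ∀ z : ℂ, ‖z‖ < 1 →
      eval (W n f) z = (∑ j ∈ Finset.range n, z ^ j) * eval f (z ^ n))
    (n : ℕ) (hn : 1 ≤ n) (g : H2) :
    g ∈ LinearMap.ker ((ContinuousLinearMap.adjoint (W n) : H2 →L[ℂ] H2) : H2 →ₗ[ℂ] H2) ↔
      ∀ q : ℕ, ∑ j ∈ Finset.range n, g (q * n + j) = 0 := by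
  rw [LinearMap.mem_ker, ContinuousLinearMap.coe_coe]
  constructor
  · intro h q
    rw [← adjoint_apply W hW n hn g q, h]
    rfl
  · intro h
    apply lp.ext
    funext q
    rw [adjoint_apply W hW n hn g q, h q]
    rfl


/-- for `k ≥ 1`, `⋂_(n ≥ k+1) ker W_n* = span{1 - z^m : 1 ≤ m ≤ k}`,
where `p m` has the Taylor coefficients of `1 - z^m`. -/
theorem inter_ker_adjoint (W : ℕ → H2 →L[ℂ] H2)
    (hW : ∀ n : ℕ, 1 ≤ n → ∀ f : H2, ∀ z : ℂ, ‖z‖ < 1 →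
      eval (W n f) z = (∑ j ∈ Finset.range n, z ^ j) * eval f (z ^ n))
    (p : ℕ → H2)
    (hp : ∀ m j : ℕ, p m j = (if j = 0 then (1 : ℂ) else 0) - (if j = m then 1 else 0))
    (k : ℕ) (hk : 1 ≤ k) :
    (⨅ (n : ℕ) (_ : k + 1 ≤ n), LinearMap.ker ((ContinuousLinearMap.adjoint (W n) : H2 →L[ℂ] H2) : H2 →ₗ[ℂ] H2))
      = Submodule.span ℂ (p '' {m : ℕ | 1 ≤ m ∧ m ≤ k}) := by
  apply le_antisymm
  · -- infimum ≤ span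
    intro g hg
    simp only [Submodule.mem_iInf] at hg
    have hS : ∀ n : ℕ, k + 1 ≤ n → ∀ q : ℕ,
        ∑ j ∈ Finset.range n, g (q * n + j) = 0 := by
      intro n hn
      exact (mem_ker_adjoint_iff W hW n (by omega) g).mp (hg n hn)
    have hT : ∀ n : ℕ, k + 1 ≤ n → ∑ j ∈ Finset.range n, g j = 0 := by
      intro n hn
      have := hS n hn 0
      simpa using this
    have hzero : ∀ i : ℕ, k + 1 ≤ i → g i = 0 := by
      intro i hi
      have h1 := hT i hi
      have h2 := hT (i + 1) (by omega)
      rw [Finset.sum_range_succ, h1, zero_add] at h2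
      exact h2
    have h0 : g 0 = - ∑ m ∈ Finset.Icc 1 k, g m := by
      have h1 := hT (k + 1) le_rfl
      have hset : Finset.range (k + 1) = insert 0 (Finset.Icc 1 k) := by
        ext j
        simp only [Finset.mem_range, Finset.mem_insert, Finset.mem_Icc]
        omega
      rw [hset, Finset.sum_insert (by simp)] at h1
      exact eq_neg_of_add_eq_zero_left h1
    have hrep : g = ∑ m ∈ Finset.Icc 1 k, (-(g m)) • p m := by
      apply lp.ext
      funext j
      have hcoe : ∀ s : Finset ℕ,
          ((∑ m ∈ s, (-(g m)) • p m : H2) : ∀ _ : ℕ, ℂ) j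
            = ∑ m ∈ s, (-(g m)) * (p m j) := by
        intro s
        classical
        induction s using Finset.induction_on with
        | empty => simp
        | insert _ _ ha ih =>
            rw [Finset.sum_insert ha, Finset.sum_insert ha, ← ih, lp.coeFn_add,
              Pi.add_apply, lp.coeFn_smul, Pi.smul_apply, smul_eq_mul]
      show g j = _
      rw [hcoe]
      by_cases hj0 : j = 0
      · subst hj0
        rw [h0, ← Finset.sum_neg_distrib]
        apply Finset.sum_congr rfl
        intro m hm
        have hm1 : m ≠ 0 := by
          simp only [Finset.mem_Icc] at hm; omega
        rw [hp]
        simp [Ne.symm hm1]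
      · by_cases hjk : j ≤ k
        · have hj1 : 1 ≤ j := by omega
          have : ∀ m ∈ Finset.Icc 1 k,
              (-(g m)) * (p m j) = if j = m then g m else 0 := by
            intro m _
            rw [hp, if_neg hj0]
            by_cases h : j = m <;> simp [h]
          rw [Finset.sum_congr rfl this, Finset.sum_ite_eq]
          simp [Finset.mem_Icc, hj1, hjk]
        · rw [hzero j (by omega)]
          symm
          apply Finset.sum_eq_zero
          intro m hm
          have hm2 : m ≤ k := by
            simp only [Finset.mem_Icc] at hm; omega
          have hjm : j ≠ m := by omega
          rw [hp, if_neg hj0, if_neg hjm]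
          ring
    rw [hrep]
    refine Submodule.sum_mem _ fun m hm => Submodule.smul_mem _ _ ?_
    apply Submodule.subset_span
    refine ⟨m, ?_, rfl⟩
    simpa [Set.mem_setOf_eq, Finset.mem_Icc] using hm
  · -- span ≤ infimum
    rw [Submodule.span_le]
    rintro x ⟨m, ⟨hm1, hm2⟩, rfl⟩
    simp only [SetLike.mem_coe, Submodule.mem_iInf]
    intro n hn
    rw [mem_ker_adjoint_iff W hW n (by omega)]
    intro q
    rcases q with _ | q
    · have h0n : (0 : ℕ) ∈ Finset.range n := by simp; omega
      have hmn : m ∈ Finset.range n := by simp; omega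
      have : ∀ j ∈ Finset.range n, p m (0 * n + j)
          = (if j = 0 then (1:ℂ) else 0) - (if j = m then 1 else 0) := by
        intro j _
        rw [zero_mul, zero_add, hp]
      rw [Finset.sum_congr rfl this, Finset.sum_sub_distrib,
        Finset.sum_ite_eq' (Finset.range n) 0 (fun _ => (1:ℂ)),
        Finset.sum_ite_eq' (Finset.range n) m (fun _ => (1:ℂ)),
        if_pos h0n, if_pos hmn, sub_self]
    · apply Finset.sum_eq_zero
      intro j _
      have hge : n ≤ (q + 1) * n + j := by
        have : n ≤ (q + 1) * n := Nat.le_mul_of_pos_left n (Nat.succ_pos q)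
        omega
      have h1 : (q + 1) * n + j ≠ 0 := by omega
      have h2 : (q + 1) * n + j ≠ m := by omega
      rw [hp, if_neg h1, if_neg h2]
      ring
end

section
/- The intersection ⋂_{n=2}^∞ ker(W_n*) is the one-dimensional subspace spanned by the function 1 − z, where W_n* is the adjoint of W_n on H². -/
open Filter Topology
open scoped ComplexInnerProductSpace

/-- A power series with bounded coefficients has radius at least 1 and converges
to its tsum. -/
lemma aux_hasFPowerSeriesAt (c : ℕ → ℂ) (C : ℝ) (h : ∀ n, ‖c n‖ ≤ C) :
    HasFPowerSeriesAt (fun z : ℂ => ∑' n : ℕ, c n * z ^ n)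
      (FormalMultilinearSeries.ofScalars ℂ c) 0 := by
  have hrad : (1 : ENNReal) ≤ (FormalMultilinearSeries.ofScalars ℂ c).radius := by
    apply FormalMultilinearSeries.le_radius_of_bound _ C
    intro n
    have : ‖FormalMultilinearSeries.ofScalars ℂ c n‖ = ‖c n‖ :=
      FormalMultilinearSeries.ofScalars_norm (E := ℂ) (c := c) (n := n)
    simpa [this] using h n
  have hpos : 0 < (FormalMultilinearSeries.ofScalars ℂ c).radius :=
    lt_of_lt_of_le one_pos hrad
  have hb := (FormalMultilinearSeries.ofScalars ℂ c).hasFPowerSeriesOnBall hpos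
  have hfun : (fun z : ℂ => ∑' n : ℕ, c n * z ^ n)
      = (FormalMultilinearSeries.ofScalars ℂ c).sum := by
    funext z
    rw [FormalMultilinearSeries.sum]
    exact tsum_congr fun n => by
      rw [FormalMultilinearSeries.ofScalars_apply_eq, smul_eq_mul]
  rw [hfun]
  exact hb.hasFPowerSeriesAt

/-- Uniqueness of power series coefficients for bounded sequences. -/
lemma aux_coeff_unique (c d : ℕ → ℂ) (C D : ℝ) (hc : ∀ n, ‖c n‖ ≤ C)
    (hd : ∀ n, ‖d n‖ ≤ D)
    (h : ∀ z : ℂ, ‖z‖ < 1 → ∑' n : ℕ, c n * z ^ n = ∑' n : ℕ, d n * z ^ n) :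
    c = d := by
  have h1 := aux_hasFPowerSeriesAt c C hc
  have h2 := aux_hasFPowerSeriesAt d D hd
  have hev : (fun z : ℂ => ∑' n : ℕ, c n * z ^ n)
      =ᶠ[nhds (0 : ℂ)] fun z : ℂ => ∑' n : ℕ, d n * z ^ n := by
    filter_upwards [Metric.ball_mem_nhds (0 : ℂ) one_pos] with z hz
    exact h z (by simpa using mem_ball_zero_iff.mp hz)
  have h1' := h1.congr hev
  have := h1'.eq_formalMultilinearSeries h2
  exact FormalMultilinearSeries.ofScalars_series_injective ℂ ℂ this

lemma aux_bdd (f : H2) (n : ℕ) : ‖f n‖ ≤ ‖f‖ :=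
  lp.norm_apply_le_norm (by norm_num) f n

/-- HasSum for evaluation of an H2 element inside the disk. -/
lemma aux_summable_norm (f : H2) {w : ℂ} (hw : ‖w‖ < 1) :
    Summable fun m : ℕ => ‖f m * w ^ m‖ := by
  apply Summable.of_nonneg_of_le (fun m => norm_nonneg _)
    (fun m => ?_) ((summable_geometric_of_lt_one (norm_nonneg w) hw).mul_left ‖f‖)
  rw [norm_mul, norm_pow]
  exact mul_le_mul_of_nonneg_right (aux_bdd f m) (by positivity)

open Fin.NatCast in
/-- The series rearrangement: `∑ f(k/n) z^k = (∑_{j<n} z^j) · ∑ f(m) (z^n)^m`. -/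
lemma aux_rearrange (f : H2) (n : ℕ) (hn : 1 ≤ n) (z : ℂ) (hz : ‖z‖ < 1) :
    ∑' k : ℕ, f (k / n) * z ^ k
      = (∑ j ∈ Finset.range n, z ^ j) * ∑' m : ℕ, f m * (z ^ n) ^ m := by
  haveI : NeZero n := ⟨by omega⟩
  have hzn : ‖z ^ n‖ < 1 := by
    rw [norm_pow]; exact pow_lt_one₀ (norm_nonneg z) hz (by omega)
  have hsum1 : Summable fun r : Fin n => ‖(z : ℂ) ^ (r : ℕ)‖ :=
    ⟨_, hasSum_fintype _⟩
  have hsum2 : Summable fun m : ℕ => ‖f m * (z ^ n) ^ m‖ := aux_summable_norm f hzn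
  have key := tsum_mul_tsum_of_summable_norm (R := ℂ) hsum1 hsum2
  have he : ∀ k : ℕ,
      z ^ (((k : Fin n) : ℕ)) * (f (k / n) * (z ^ n) ^ (k / n)) = f (k / n) * z ^ k := by
    intro k
    rw [Fin.val_natCast]
    have hzz : (z : ℂ) ^ (k % n) * (z ^ n) ^ (k / n) = z ^ k := by
      rw [← pow_mul, ← pow_add, Nat.mod_add_div]
    rw [← hzz]; ring
  calc ∑' k : ℕ, f (k / n) * z ^ k
      = ∑' p : Fin n × ℕ, z ^ (p.1 : ℕ) * (f p.2 * (z ^ n) ^ p.2) := by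
        rw [← Equiv.tsum_eq ((Nat.divModEquiv n).trans (Equiv.prodComm _ _))
          (fun p : Fin n × ℕ => z ^ (p.1 : ℕ) * (f p.2 * (z ^ n) ^ p.2))]
        exact tsum_congr fun k => (he k).symm
    _ = (∑' r : Fin n, z ^ (r : ℕ)) * ∑' m : ℕ, f m * (z ^ n) ^ m := key.symm
    _ = (∑ j ∈ Finset.range n, z ^ j) * ∑' m : ℕ, f m * (z ^ n) ^ m := by
        rw [tsum_fintype, Fin.sum_univ_eq_sum_range]

/-- The coefficient formula for W_n. -/
lemma aux_W_coeff (W : ℕ → H2 →L[ℂ] H2)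
    (hW : ∀ n : ℕ, 1 ≤ n → ∀ f : H2, ∀ z : ℂ, ‖z‖ < 1 →
      eval (W n f) z = (∑ j ∈ Finset.range n, z ^ j) * eval f (z ^ n))
    (n : ℕ) (hn : 1 ≤ n) (f : H2) (k : ℕ) : (W n f) k = f (k / n) := by
  have h := aux_coeff_unique (fun k => (W n f) k) (fun k => f (k / n)) ‖W n f‖ ‖f‖
    (fun k => aux_bdd _ k) (fun k => aux_bdd f _) ?_
  · exact congrFun h k
  · intro z hz
    have h1 : ∑' m : ℕ, (W n f) m * z ^ m = eval (W n f) z := rfl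
    rw [h1, hW n hn f z hz, aux_rearrange f n hn z hz]
    rfl

lemma aux_div_bounds {n k j : ℕ} (hn : 0 < n) (h : k / n = j) :
    n * j ≤ k ∧ k < n * j + n := by
  subst h
  have e := Nat.div_add_mod k n
  have hm := Nat.mod_lt k hn
  constructor
  · exact Nat.le.intro e
  · calc k = n * (k / n) + k % n := e.symm
      _ < n * (k / n) + n := Nat.add_lt_add_left hm _

/-- Inner product of W_n (single j 1) with g. -/
lemma aux_inner_W_single (W : ℕ → H2 →L[ℂ] H2)
    (hW : ∀ n : ℕ, 1 ≤ n → ∀ f : H2, ∀ z : ℂ, ‖z‖ < 1 →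
      eval (W n f) z = (∑ j ∈ Finset.range n, z ^ j) * eval f (z ^ n))
    (n : ℕ) (hn : 1 ≤ n) (j : ℕ) (g : H2) :
    ⟪W n (lp.single 2 j (1 : ℂ)), g⟫
      = ∑ k ∈ Finset.Ico (n * j) (n * j + n), g k := by
  rw [lp.inner_eq_tsum]
  have hco : ∀ k : ℕ, (W n (lp.single 2 j (1 : ℂ))) k
      = if k / n = j then (1 : ℂ) else 0 := by
    intro k
    rw [aux_W_coeff W hW n hn _ k]
    by_cases h : k / n = j
    · rw [if_pos h, h, lp.single_apply_self]
    · rw [if_neg h, lp.single_apply_ne _ _ _ h]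
  have hvan : ∀ k ∉ Finset.Ico (n * j) (n * j + n),
      ⟪(W n (lp.single 2 j (1 : ℂ))) k, g k⟫ = 0 := by
    intro k hk
    have hkd : k / n ≠ j := by
      intro h
      exact hk (Finset.mem_Ico.mpr (aux_div_bounds (by omega) h))
    rw [RCLike.inner_apply, hco k, if_neg hkd, map_zero, mul_zero]
  rw [tsum_eq_sum hvan]
  apply Finset.sum_congr rfl
  intro k hk
  have hkd : k / n = j := by
    rcases Finset.mem_Ico.mp hk with ⟨h1, h2⟩
    have e := Nat.div_add_mod k n
    have : n * j ≤ n * (k / n) + k % n := by omega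
    rcases aux_div_bounds (n := n) (k := k) (j := k / n) (by omega) rfl with ⟨a, b⟩
    by_contra hne
    rcases Nat.lt_or_ge (k / n) j with hlt | hge
    · have : n * (k / n) + n ≤ n * j := by
        have : k / n + 1 ≤ j := hlt
        calc n * (k / n) + n = n * (k / n + 1) := by ring
          _ ≤ n * j := Nat.mul_le_mul_left n this
      omega
    · have hgt : j < k / n := lt_of_le_of_ne hge (Ne.symm hne)
      have : n * j + n ≤ n * (k / n) := by
        have : j + 1 ≤ k / n := hgt
        calc n * j + n = n * (j + 1) := by ring
          _ ≤ n * (k / n) := Nat.mul_le_mul_left n this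
      omega
  rw [RCLike.inner_apply, hco k, if_pos hkd, map_one, mul_one]

/-- `⋂_(n ≥ 2) ker W_n*` is the one-dimensional subspace spanned by
`1 - z` (the element `p` with Taylor coefficients of `1 - z`). -/
theorem inter_ker_adjoint_one_minus_z (W : ℕ → H2 →L[ℂ] H2)
    (hW : ∀ n : ℕ, 1 ≤ n → ∀ f : H2, ∀ z : ℂ, ‖z‖ < 1 →
      eval (W n f) z = (∑ j ∈ Finset.range n, z ^ j) * eval f (z ^ n))
    (p : H2)
    (hp : ∀ j : ℕ, p j = (if j = 0 then (1 : ℂ) else 0) - (if j = 1 then 1 else 0)) :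
    (⨅ (n : ℕ) (_ : 2 ≤ n), LinearMap.ker ((ContinuousLinearMap.adjoint (W n) : H2 →L[ℂ] H2) : H2 →ₗ[ℂ] H2))
      = Submodule.span ℂ {p} := by
  apply le_antisymm
  · -- ⊆ : any g killed by all adjoints lies in span {p}
    intro g hg
    simp only [Submodule.mem_iInf] at hg
    have hsum : ∀ n : ℕ, 2 ≤ n → ∑ k ∈ Finset.range n, g k = 0 := by
      intro n hn
      have hker : (ContinuousLinearMap.adjoint (W n)) g = 0 :=
        LinearMap.mem_ker.mp (hg n hn)
      have h0 : ⟪W n (lp.single 2 0 (1 : ℂ)), g⟫ = 0 := by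
        rw [← ContinuousLinearMap.adjoint_inner_right, hker, inner_zero_right]
      rw [aux_inner_W_single W hW n (by omega) 0 g] at h0
      simpa using h0
    have h2 : g 0 + g 1 = 0 := by
      have := hsum 2 le_rfl
      simpa [Finset.sum_range_succ] using this
    have hk : ∀ k : ℕ, 2 ≤ k → g k = 0 := by
      intro k hkk
      have h1 := hsum k hkk
      have h2' := hsum (k + 1) (by omega)
      rw [Finset.sum_range_succ, h1, zero_add] at h2'
      exact h2'
    have hgp : g = g 0 • p := by
      ext k
      rw [lp.coeFn_smul, Pi.smul_apply, smul_eq_mul, hp k]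
      match k with
      | 0 => simp
      | 1 => rw [if_neg one_ne_zero, if_pos rfl, zero_sub, mul_neg_one]; linear_combination h2
      | (m + 2) => simp [hk (m + 2) (by omega)]
    rw [hgp]
    exact Submodule.smul_mem _ _ (Submodule.mem_span_singleton_self p)
  · -- ⊇ : p is in every kernel
    rw [Submodule.span_le, Set.singleton_subset_iff]
    simp only [SetLike.mem_coe, Submodule.mem_iInf]
    intro n hn
    rw [LinearMap.mem_ker]
    have key : ∀ f : H2, ⟪W n f, p⟫ = 0 := by
      intro f
      rw [lp.inner_eq_tsum]
      have hvan : ∀ k ∉ ({0, 1} : Finset ℕ), ⟪(W n f) k, p k⟫ = 0 := by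
        intro k hk
        simp only [Finset.mem_insert, Finset.mem_singleton] at hk
        push_neg at hk
        rw [RCLike.inner_apply, hp k, if_neg hk.1, if_neg hk.2, sub_zero, zero_mul]
      rw [tsum_eq_sum hvan]
      have hW0 : (W n f) 0 = f 0 := by
        rw [aux_W_coeff W hW n (by omega) f 0, Nat.zero_div]
      have hW1 : (W n f) 1 = f 0 := by
        rw [aux_W_coeff W hW n (by omega) f 1, Nat.div_eq_of_lt (by omega)]
      rw [Finset.sum_insert (by norm_num), Finset.sum_singleton]
      rw [RCLike.inner_apply, RCLike.inner_apply, hp 0, hp 1, hW0, hW1]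
      simp
    have : ⟪(ContinuousLinearMap.adjoint (W n)) p,
        (ContinuousLinearMap.adjoint (W n)) p⟫ = 0 := by
      rw [ContinuousLinearMap.adjoint_inner_right]
      exact key _
    exact inner_self_eq_zero.mp this
end

section
/- For every k ≥ 2, the function h_k(z) = (1/(1 − z)) · log((1 + z + ⋯ + z^{k−1})/k) extends to an analytic function on the unit disk and belongs to the Hardy space H². -/
open Filter Topology
open scoped ComplexInnerProductSpace

open scoped ENNReal

/- Auxiliary: partial harmonic sums -/
noncomputable def Hsum (n : ℕ) : ℝ := ∑ i ∈ Finset.range n, (1:ℝ)/(i+1)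

noncomputable def hkC (k n : ℕ) : ℝ := Hsum n - Hsum (n / k) - Real.log k

lemma Hsum_succ (n : ℕ) : Hsum (n+1) = Hsum n + 1/(n+1) := by
  simp [Hsum, Finset.sum_range_succ]

lemma term_upper (i : ℕ) (hi : 1 ≤ i) :
    (1:ℝ)/(i+1) ≤ Real.log (i+1) - Real.log i := by
  have hi' : (0:ℝ) < i := by exact_mod_cast hi
  have h := Real.log_le_sub_one_of_pos (x := (i:ℝ)/(i+1)) (by positivity)
  rw [Real.log_div (by positivity) (by positivity)] at h
  have : (i:ℝ)/(i+1) - 1 = -(1/(i+1)) := by field_simp; ring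
  rw [this] at h
  linarith

lemma term_lower (i : ℕ) :
    Real.log (i+2) - Real.log (i+1) ≤ (1:ℝ)/(i+1) := by
  have h := Real.log_le_sub_one_of_pos (x := ((i:ℝ)+2)/(i+1)) (by positivity)
  rw [Real.log_div (by positivity) (by positivity)] at h
  have : ((i:ℝ)+2)/(i+1) - 1 = 1/(i+1) := by field_simp; ring
  rw [this] at h
  linarith

lemma Hsum_diff_le (q n : ℕ) (hq : 1 ≤ q) (hqn : q ≤ n) :
    Hsum n - Hsum q ≤ Real.log n - Real.log q := by
  have h1 : Hsum n - Hsum q = ∑ i ∈ Finset.Ico q n, (1:ℝ)/(i+1) := by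
    rw [Hsum, Hsum, Finset.sum_Ico_eq_sub _ hqn]
  have h2 : Real.log n - Real.log q
      = ∑ i ∈ Finset.Ico q n, (Real.log (i+1) - Real.log i) := by
    rw [Finset.sum_Ico_eq_sub _ hqn]
    have t : ∀ m : ℕ, ∑ i ∈ Finset.range m, (Real.log (i+1) - Real.log i)
        = Real.log m := by
      intro m
      have := Finset.sum_range_sub (fun i : ℕ => Real.log i) m
      simpa using this
    rw [t, t]
  rw [h1, h2]
  apply Finset.sum_le_sum
  intro i hi
  exact term_upper i (le_trans hq (Finset.mem_Ico.mp hi).1)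

lemma le_Hsum_diff (q n : ℕ) (hqn : q ≤ n) :
    Real.log (n+1) - Real.log (q+1) ≤ Hsum n - Hsum q := by
  have h1 : Hsum n - Hsum q = ∑ i ∈ Finset.Ico q n, (1:ℝ)/(i+1) := by
    rw [Hsum, Hsum, Finset.sum_Ico_eq_sub _ hqn]
  have h2 : Real.log (n+1) - Real.log (q+1)
      = ∑ i ∈ Finset.Ico q n, (Real.log (i+2) - Real.log (i+1)) := by
    rw [Finset.sum_Ico_eq_sub _ hqn]
    have t : ∀ m : ℕ, ∑ i ∈ Finset.range m, (Real.log (i+2) - Real.log (i+1))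
        = Real.log (m+1) := by
      intro m
      have := Finset.sum_range_sub (fun i : ℕ => Real.log (i+1)) m
      simpa [add_assoc, show (1:ℝ)+1 = 2 by norm_num] using this
    rw [t, t]
  rw [h1, h2]
  apply Finset.sum_le_sum
  intro i _
  exact term_lower i

lemma hkC_bound (k n : ℕ) (hk : 2 ≤ k) (hn : k ≤ n) :
    |hkC k n| ≤ 2*k/n := by
  have hk0 : 0 < k := by omega
  have hq1 : 1 ≤ n / k := (Nat.one_le_div_iff hk0).mpr hn
  have hmod := Nat.div_add_mod n k
  have hmlt := Nat.mod_lt n hk0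
  have hkq : k * (n / k) ≤ n := by omega
  have hlt : n < k * (n / k + 1) := by
    have h : k * (n / k + 1) = k * (n / k) + k := by ring
    omega
  have hqn : n / k ≤ n := Nat.div_le_self n k
  set q := n / k with hq
  -- real versions
  have hK2 : (2:ℝ) ≤ (k:ℝ) := by exact_mod_cast hk
  have hK0 : (0:ℝ) < (k:ℝ) := by linarith
  have hQ1 : (1:ℝ) ≤ (q:ℝ) := by exact_mod_cast hq1
  have hQ0 : (0:ℝ) < (q:ℝ) := by linarith
  have hKN : (k:ℝ) ≤ (n:ℝ) := by exact_mod_cast hn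
  have hN0 : (0:ℝ) < (n:ℝ) := by linarith
  have hKQ : (k:ℝ) * (q:ℝ) ≤ (n:ℝ) := by exact_mod_cast hkq
  have hNlt : (n:ℝ) < (k:ℝ) * ((q:ℝ) + 1) := by exact_mod_cast hlt
  -- upper bound
  have u1 : hkC k n ≤ Real.log n - Real.log q - Real.log k := by
    have := Hsum_diff_le q n hq1 hqn
    unfold hkC
    rw [← hq]
    linarith
  have u2 : Real.log (n:ℝ) - Real.log (q:ℝ) - Real.log (k:ℝ)
      = Real.log ((n:ℝ)/((k:ℝ)*(q:ℝ))) := by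
    rw [Real.log_div (ne_of_gt hN0) (by positivity), Real.log_mul (ne_of_gt hK0) (ne_of_gt hQ0)]
    ring
  have u3 : Real.log ((n:ℝ)/((k:ℝ)*(q:ℝ))) ≤ (n:ℝ)/((k:ℝ)*(q:ℝ)) - 1 :=
    Real.log_le_sub_one_of_pos (by positivity)
  have u4 : (n:ℝ)/((k:ℝ)*(q:ℝ)) - 1 ≤ 2*(k:ℝ)/(n:ℝ) := by
    rw [div_sub_one (by positivity), div_le_div_iff₀ (by positivity) hN0]
    have h3 : (k:ℝ) ≤ (k:ℝ) * (q:ℝ) := by nlinarith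
    have h1 : (n:ℝ) - (k:ℝ)*(q:ℝ) ≤ (k:ℝ) := by linarith
    have h2 : (n:ℝ) ≤ 2*((k:ℝ)*(q:ℝ)) := by linarith
    nlinarith [mul_le_mul h1 h2 hN0.le hK0.le]
  -- lower bound
  have l1 : Real.log ((n:ℝ)+1) - Real.log ((q:ℝ)+1) - Real.log (k:ℝ) ≤ hkC k n := by
    have := le_Hsum_diff q n hqn
    unfold hkC
    rw [← hq]
    linarith
  have l2 : Real.log ((n:ℝ)+1) - Real.log ((q:ℝ)+1) - Real.log (k:ℝ)
      = Real.log (((n:ℝ)+1)/((k:ℝ)*((q:ℝ)+1))) := by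
    rw [Real.log_div (by positivity) (by positivity), Real.log_mul (ne_of_gt hK0) (by positivity)]
    ring
  have l3 : 1 - ((k:ℝ)*((q:ℝ)+1))/((n:ℝ)+1) ≤ Real.log (((n:ℝ)+1)/((k:ℝ)*((q:ℝ)+1))) := by
    have := Real.one_sub_inv_le_log_of_pos
      (x := ((n:ℝ)+1)/((k:ℝ)*((q:ℝ)+1))) (by positivity)
    rwa [inv_div] at this
  have l4 : -(2*(k:ℝ)/(n:ℝ)) ≤ 1 - ((k:ℝ)*((q:ℝ)+1))/((n:ℝ)+1) := by
    have key : ((k:ℝ)*((q:ℝ)+1))/((n:ℝ)+1) ≤ ((n:ℝ) + 2*(k:ℝ))/(n:ℝ) := by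
      rw [div_le_div_iff₀ (by positivity) hN0]
      nlinarith [hKQ, hK2, hN0, hQ1]
    have e : ((n:ℝ) + 2*(k:ℝ))/(n:ℝ) = 1 + 2*(k:ℝ)/(n:ℝ) := by
      field_simp
    rw [e] at key
    linarith
  rw [abs_le]
  constructor
  · linarith
  · linarith

lemma hkC_zero (k : ℕ) : hkC k 0 = -Real.log k := by
  simp [hkC, Hsum]

lemma hkC_succ_sub (k : ℕ) (hk : 2 ≤ k) (m : ℕ) :
    hkC k (m+1) - hkC k m
      = 1/((m:ℝ)+1) - (if k ∣ (m+1) then (k:ℝ)/((m:ℝ)+1) else 0) := by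
  have hk0 : (k:ℝ) ≠ 0 := by positivity
  have hdiv := Nat.succ_div (a := m) (b := k)
  unfold hkC
  by_cases hd : k ∣ (m+1)
  · rw [if_pos hd]
    have h1 : (m+1)/k = m/k + 1 := by rw [hdiv, if_pos hd]
    have h2 : (m+1 : ℕ) = k * (m/k + 1) := by
      rw [← h1]
      exact (Nat.mul_div_cancel' hd).symm
    have hcast : ((m:ℝ)+1) = (k:ℝ) * (((m/k : ℕ):ℝ) + 1) := by
      exact_mod_cast h2
    have heq : (k:ℝ)/((m:ℝ)+1) = 1/(((m/k : ℕ):ℝ) + 1) := by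
      rw [hcast]
      have hpos : (((m/k : ℕ):ℝ) + 1) ≠ 0 := by positivity
      field_simp
    rw [h1, Hsum_succ, Hsum_succ, heq]
    push_cast
    ring
  · rw [if_neg hd]
    have h1 : (m+1)/k = m/k := by rw [hdiv, if_neg hd, Nat.add_zero]
    rw [h1, Hsum_succ]
    push_cast
    ring

lemma hkC_memlp (k : ℕ) (hk : 2 ≤ k) :
    Memℓp (fun n => ((hkC k n : ℝ) : ℂ)) 2 := by
  apply memℓp_gen
  have h2 : ((2:ℝ≥0∞)).toReal = ((2:ℕ):ℝ) := by norm_num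
  rw [h2]
  have hnorm : ∀ n : ℕ, ‖((hkC k n : ℝ):ℂ)‖ ^ ((2:ℕ):ℝ) = |hkC k n|^(2:ℕ) := by
    intro n
    rw [Complex.norm_real, Real.rpow_natCast, Real.norm_eq_abs]
  apply Summable.congr _ (fun n => (hnorm n).symm)
  rw [← summable_nat_add_iff k]
  have hsum : Summable (fun n : ℕ => (2*(k:ℝ))^2 * (1/((n:ℝ)+1)^2)) := by
    apply Summable.mul_left
    have hbase := (Real.summable_one_div_nat_pow (p := 2)).mpr one_lt_two
    have := (summable_nat_add_iff 1).mpr hbase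
    apply this.congr
    intro n
    push_cast
    ring
  apply Summable.of_nonneg_of_le (fun n => by positivity) _ hsum
  intro n
  have hb := hkC_bound k (n+k) hk (by omega)
  have hcast : (((n+k : ℕ)):ℝ) = (n:ℝ)+(k:ℝ) := by push_cast; ring
  rw [hcast] at hb
  have hK2 : (2:ℝ) ≤ (k:ℝ) := by exact_mod_cast hk
  have h1 : |hkC k (n+k)| ≤ 2*(k:ℝ)/((n:ℝ)+1) := by
    refine le_trans hb ?_
    apply div_le_div_of_nonneg_left (by positivity) (by positivity) (by linarith)
  calc |hkC k (n+k)|^2 ≤ (2*(k:ℝ)/((n:ℝ)+1))^2 := by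
        apply pow_le_pow_left₀ (abs_nonneg _) h1
    _ = (2*(k:ℝ))^2 * (1/((n:ℝ)+1)^2) := by
        rw [div_pow]; ring

/-- for `k ≥ 2`, `h_k(z) = (1/(1-z)) log((1+z+⋯+z^(k-1))/k)` (principal
branch, pinned by its value `-log k` at `0`) extends analytically to the unit disk and
belongs to `H²`. -/
theorem hk_mem_H2 (k : ℕ) (hk : 2 ≤ k) :
    ∃ h : H2,
      DifferentiableOn ℂ (eval h) (Metric.ball (0 : ℂ) 1) ∧
      eval h 0 = -Real.log k ∧
      (∀ z : ℂ, ‖z‖ < 1 →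
        Complex.exp ((1 - z) * eval h z) = (∑ j ∈ Finset.range k, z ^ j) / k) := by
  have hkpos : 0 < k := by omega
  have hk0 : (k:ℂ) ≠ 0 := Nat.cast_ne_zero.mpr (by omega)
  set c : ℕ → ℂ := fun n => ((hkC k n : ℝ) : ℂ) with hc
  set h : H2 := ⟨c, hkC_memlp k hk⟩ with hh
  have heval : ∀ z : ℂ, eval h z = ∑' n, c n * z^n := fun z => rfl
  set C : ℝ := ‖h‖ with hC
  have hbdd : ∀ n, ‖c n‖ ≤ C := fun n =>
    lp.norm_apply_le_norm (by norm_num) h n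
  have hsummable : ∀ z : ℂ, ‖z‖ < 1 → Summable (fun n => c n * z^n) := by
    intro z hz
    apply Summable.of_norm
    apply Summable.of_nonneg_of_le (fun n => norm_nonneg _) _
      ((summable_geometric_of_lt_one (norm_nonneg z) hz).mul_left C)
    intro n
    rw [norm_mul, norm_pow]
    exact mul_le_mul_of_nonneg_right (hbdd n) (by positivity)
  have hHasSum : ∀ z : ℂ, ‖z‖ < 1 → HasSum (fun n => c n * z^n) (eval h z) := by
    intro z hz
    rw [heval]
    exact (hsummable z hz).hasSum
  -- analyticity
  set p : FormalMultilinearSeries ℂ ℂ ℂ := FormalMultilinearSeries.ofScalars ℂ c with hp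
  have hrad : 1 ≤ p.radius := by
    apply FormalMultilinearSeries.le_radius_of_bound _ C
    intro n
    rw [hp, FormalMultilinearSeries.ofScalars_norm]
    simpa using hbdd n
  have hfp : HasFPowerSeriesOnBall (eval h) p 0 1 :=
    { r_le := hrad
      r_pos := one_pos
      hasSum := by
        intro y hy
        rw [EMetric.mem_ball, edist_zero_right] at hy
        have hy' : ‖y‖ < 1 := by
          have h1 : ‖y‖₊ < 1 := by rw [enorm_eq_nnnorm] at hy; exact_mod_cast hy
          exact_mod_cast h1
        have hs := hHasSum y hy'
        simp only [zero_add, hp, FormalMultilinearSeries.ofScalars_apply_eq, smul_eq_mul]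
        exact hs }
  have hDiff : DifferentiableOn ℂ (eval h) (Metric.ball (0 : ℂ) 1) := by
    have := hfp.differentiableOn
    have hball : Metric.ball (0:ℂ) 1 = Metric.eball (0:ℂ) 1 := by
      rw [← Metric.emetric_ball, ENNReal.ofReal_one]
    rw [hball]
    exact this
  have hval0 : eval h 0 = -Real.log k := by
    rw [heval, tsum_eq_single 0 (fun n hn => by simp [zero_pow hn])]
    simp [hc, hkC_zero]
  refine ⟨h, hDiff, hval0, ?_⟩
  intro z hz
  have hz1 : z ≠ 1 := by
    intro hzz
    rw [hzz] at hz
    simp at hz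
  have h1z : (1:ℂ) - z ≠ 0 := sub_ne_zero.mpr (Ne.symm hz1)
  have hzk : ‖z^k‖ < 1 := by
    rw [norm_pow]
    exact pow_lt_one₀ (norm_nonneg z) hz (by omega)
  have h1zk : (1:ℂ) - z^k ≠ 0 := by
    refine sub_ne_zero.mpr ?_
    intro hzz
    rw [← hzz] at hzk
    simp at hzk
  set S := eval h z with hSdef
  have hS : HasSum (fun n => c n * z^n) S := hHasSum z hz
  have hS2 : HasSum (fun n => c n * z^(n+1)) (z * S) := by
    have heq : (fun n => c n * z^(n+1)) = fun n => z * (c n * z^n) :=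
      funext fun n => by ring
    rw [heq]
    exact hS.mul_left z
  set f : ℕ → ℂ := fun n => if n = 0 then 0 else c (n-1) * z^n with hfdef
  have hf : HasSum f (z * S) := by
    have h1 : HasSum (fun n => f (n+1)) (z * S) := by
      apply hS2.congr
      intro n
      simp [hfdef]
    have h2 := (hasSum_nat_add_iff (f := f) 1).mp h1
    simpa [hfdef] using h2
  have hdiff : HasSum (fun n => c n * z^n - f n) (S - z*S) := hS.sub hf
  have hA : HasSum (fun n : ℕ => z^n / n) (-Complex.log (1-z)) :=
    Complex.hasSum_taylorSeries_neg_log hz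
  have hB0 : HasSum (fun n : ℕ => -((z^k)^n / n)) (Complex.log (1-z^k)) := by
    simpa using (Complex.hasSum_taylorSeries_neg_log hzk).neg
  set b : ℕ → ℂ := fun m => if k ∣ m then -(z^m * ((k:ℂ) / m)) else 0 with hbdef
  have hinj : Function.Injective (fun n : ℕ => k * n) := fun a b hab => by
    exact Nat.eq_of_mul_eq_mul_left hkpos hab
  have hB : HasSum b (Complex.log (1-z^k)) := by
    rw [← Function.Injective.hasSum_iff hinj ?_]
    · have hcomp : (b ∘ fun n : ℕ => k * n) = fun n : ℕ => -((z^k)^n / n) := by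
        funext n
        simp only [Function.comp_apply, hbdef]
        rw [if_pos ⟨n, rfl⟩]
        rcases Nat.eq_zero_or_pos n with rfl | hn
        · simp
        · have hn0 : ((n:ℂ)) ≠ 0 := Nat.cast_ne_zero.mpr hn.ne'
          have hkn : ((k*n : ℕ):ℂ) = (k:ℂ) * n := by push_cast; ring
          rw [pow_mul, hkn, div_mul_eq_div_div, div_self hk0, one_div, div_eq_mul_inv]
      rw [hcomp]
      exact hB0
    · intro m hm
      simp only [Set.mem_range] at hm
      simp only [hbdef]
      rw [if_neg]
      rintro ⟨t, ht⟩
      exact hm ⟨t, ht.symm⟩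
  have hD : HasSum (fun n : ℕ => if n = 0 then (-(Real.log k : ℂ)) else 0)
      (-(Real.log k : ℂ)) := hasSum_ite_eq 0 _
  have htot := (hA.add hB).add hD
  have hkey : (fun n => c n * z^n - f n)
      = fun n => (z^n / n + b n) + (if n = 0 then (-(Real.log k:ℂ)) else 0) := by
    funext n
    cases n with
    | zero =>
      simp [hfdef, hbdef, hc, hkC_zero]
    | succ m =>
      have hrec := hkC_succ_sub k hk m
      have hm0 : ((m:ℂ)+1) ≠ 0 := by
        have : (0:ℝ) < (m:ℝ)+1 := by positivity
        intro hcon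
        have := congrArg Complex.re hcon
        push_cast at this
        simp at this
        linarith
      have hLHS : c (m+1) * z^(m+1) - f (m+1) = (c (m+1) - c m) * z^(m+1) := by
        simp only [hfdef]
        rw [if_neg (Nat.succ_ne_zero m)]
        simp
        ring
      rw [hLHS]
      have hsub : c (m+1) - c m
          = (1/((m:ℂ)+1) - (if k ∣ (m+1) then (k:ℂ)/((m:ℂ)+1) else 0)) := by
        simp only [hc]
        rw [← Complex.ofReal_sub, hrec]
        push_cast [apply_ite (fun x : ℝ => (x:ℂ))]
        ring_nf
      rw [hsub]
      rw [if_neg (Nat.succ_ne_zero m)]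
      simp only [hbdef]
      by_cases hd : k ∣ (m+1)
      · rw [if_pos hd, if_pos hd]
        push_cast
        field_simp
        ring
      · rw [if_neg hd, if_neg hd]
        push_cast
        field_simp
        ring
  rw [hkey] at hdiff
  have hEq : S - z*S = -Complex.log (1-z) + Complex.log (1-z^k) + (-(Real.log k:ℂ)) :=
    hdiff.unique htot
  have hfinal : (1-z)*S = -Complex.log (1-z) + Complex.log (1-z^k) + (-(Real.log k:ℂ)) := by
    linear_combination hEq
  rw [hfinal, Complex.exp_add, Complex.exp_add, Complex.exp_neg, Complex.exp_log h1z,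
    Complex.exp_log h1zk]
  have hexpk : Complex.exp (-(Real.log k:ℂ)) = ((k:ℂ))⁻¹ := by
    rw [← Complex.ofReal_neg, ← Complex.ofReal_exp, Real.exp_neg,
      Real.exp_log (by positivity : (0:ℝ) < (k:ℝ))]
    push_cast
    ring
  rw [hexpk, geom_sum_eq hz1]
  have hz1' : z - 1 ≠ 0 := sub_ne_zero.mpr hz1
  field_simp
  ring
end
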